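/- Consider a congestion game with linear latency functions f_e(x) = a_{e,1}x + a_{e,0} with a_{e,1}, a_{e,0} ≥ 0. Let q ∈ [1,2) and let S be a q-approximate pure Nash equilibrium. Then Φ(S) ≤ (2q/(2−q)) · Φ(S*), where S* is a state minimizing Rosenthal's potential Φ. -/

import Mathlib

open Finset

/-- Number of players using resource `e` at state `S`. -/
def congCount {ι ε : Type*} [Fintype ι] [DecidableEq ε]
    (S : ι → Finset ε) (e : ε) : ℕ :=
  (Finset.univ.filter fun u => e ∈ S u).card

/-- Cost of player `u` at state `S` in a congestion game with linear latencies. -/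
def linCost {ι ε : Type*} [Fintype ι] [DecidableEq ε]
    (a1 a0 : ε → ℝ) (S : ι → Finset ε) (u : ι) : ℝ :=
  ∑ e ∈ S u, (a1 e * (congCount S e : ℝ) + a0 e)

/-- Rosenthal's potential for linear latencies. -/
def linPot {ι ε : Type*} [Fintype ι] [Fintype ε] [DecidableEq ε]
    (a1 a0 : ε → ℝ) (S : ι → Finset ε) : ℝ :=
  ∑ e : ε, ∑ j ∈ Finset.Icc 1 (congCount S e), (a1 e * (j : ℝ) + a0 e)

lemma sum_sum_eq {ι ε : Type*} [Fintype ι] [Fintype ε] [DecidableEq ε]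
    (S : ι → Finset ε) (g : ε → ℝ) :
    ∑ u : ι, ∑ e ∈ S u, g e = ∑ e : ε, (congCount S e : ℝ) * g e := by
  have h : ∀ u : ι, ∑ e ∈ S u, g e = ∑ e : ε, if e ∈ S u then g e else 0 := by
    intro u
    rw [Finset.sum_ite_mem]
    congr 1
    simp [Finset.inter_eq_right]
  simp_rw [h]
  rw [Finset.sum_comm]
  refine Finset.sum_congr rfl fun e _ => ?_
  rw [Finset.sum_ite, Finset.sum_const, Finset.sum_const]
  simp [congCount, mul_comm]

lemma sum_Icc_lin (a1 a0 : ℝ) (k : ℕ) :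
    ∑ j ∈ Finset.Icc 1 k, (a1 * (j : ℝ) + a0) = a1 * (k * (k+1) / 2) + a0 * k := by
  induction k with
  | zero => simp
  | succ k ih =>
    rw [Finset.sum_Icc_succ_top (by omega : 1 ≤ k + 1), ih]
    push_cast
    ring

lemma key_nat (m n : ℕ) : 2*m*n + n ≤ 2*m^2 + n^2 := by
  rcases le_or_gt n m with h | h
  · nlinarith
  · have h1 : (m:ℤ) + 1 ≤ (n:ℤ) := by exact_mod_cast h
    have : (2*m*n + n : ℤ) ≤ 2*m^2 + n^2 := by
      nlinarith [sq_nonneg ((n:ℤ) - m), mul_le_mul_of_nonneg_left h1 (by positivity : (0:ℤ) ≤ (m:ℤ))]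
    exact_mod_cast this

lemma congCount_update_le {ι ε : Type*} [Fintype ι] [DecidableEq ι] [DecidableEq ε]
    (S : ι → Finset ε) (u : ι) (s' : Finset ε) (e : ε) :
    congCount (Function.update S u s') e ≤ congCount S e + 1 := by
  unfold congCount
  calc (Finset.univ.filter fun v => e ∈ Function.update S u s' v).card
      ≤ (insert u (Finset.univ.filter fun v => e ∈ S v)).card := by
        apply Finset.card_le_card
        intro v hv
        simp only [Finset.mem_filter, Finset.mem_univ, true_and] at hv
        rcases eq_or_ne v u with rfl | hvu
        · exact Finset.mem_insert_self _ _
        · rw [Function.update_of_ne hvu] at hv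
          exact Finset.mem_insert_of_mem (by simp [hv])
    _ ≤ _ := Finset.card_insert_le _ _

theorem stmt7 {ι ε : Type*} [Fintype ι] [Fintype ε] [DecidableEq ι] [DecidableEq ε]
    (Strat : ι → Finset (Finset ε)) (a1 a0 : ε → ℝ)
    (h1 : ∀ e, 0 ≤ a1 e) (h0 : ∀ e, 0 ≤ a0 e)
    (q : ℝ) (hq1 : 1 ≤ q) (hq2 : q < 2)
    (S Sstar : ι → Finset ε)
    (hS : ∀ u, S u ∈ Strat u) (hSstar : ∀ u, Sstar u ∈ Strat u)
    (happrox : ∀ u, ∀ s' ∈ Strat u,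
      linCost a1 a0 S u ≤ q * linCost a1 a0 (Function.update S u s') u)
    (hmin : ∀ T : ι → Finset ε, (∀ u, T u ∈ Strat u) →
      linPot a1 a0 Sstar ≤ linPot a1 a0 T) :
    linPot a1 a0 S ≤ (2 * q / (2 - q)) * linPot a1 a0 Sstar := by
  have hq0 : (0:ℝ) ≤ q := by linarith
  -- potential formula
  have hpot : ∀ T : ι → Finset ε, linPot a1 a0 T =
      ∑ e : ε, (a1 e * ((congCount T e : ℝ) * ((congCount T e : ℝ)+1) / 2)
        + a0 e * (congCount T e : ℝ)) := by
    intro T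
    exact Finset.sum_congr rfl fun e _ => sum_Icc_lin (a1 e) (a0 e) (congCount T e)
  -- total cost formula
  have hcost : ∑ u : ι, linCost a1 a0 S u
      = ∑ e : ε, (congCount S e : ℝ) * (a1 e * (congCount S e : ℝ) + a0 e) :=
    sum_sum_eq S _
  -- deviation cost bound
  have hdev : ∀ u : ι, linCost a1 a0 (Function.update S u (Sstar u)) u
      ≤ ∑ e ∈ Sstar u, (a1 e * ((congCount S e : ℝ) + 1) + a0 e) := by
    intro u
    unfold linCost
    rw [Function.update_self]
    refine Finset.sum_le_sum fun e _ => ?_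
    have hc : (congCount (Function.update S u (Sstar u)) e : ℝ)
        ≤ (congCount S e : ℝ) + 1 := by
      exact_mod_cast congCount_update_le S u (Sstar u) e
    have := mul_le_mul_of_nonneg_left hc (h1 e)
    linarith
  -- equilibrium summed
  have hEq : ∑ e : ε, (congCount S e : ℝ) * (a1 e * (congCount S e : ℝ) + a0 e)
      ≤ q * ∑ e : ε, (congCount Sstar e : ℝ) * (a1 e * ((congCount S e : ℝ)+1) + a0 e) := by
    rw [← hcost, ← sum_sum_eq Sstar (fun e => a1 e * ((congCount S e : ℝ)+1) + a0 e),
      Finset.mul_sum]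
    refine Finset.sum_le_sum fun u _ => ?_
    exact le_trans (happrox u (Sstar u) (hSstar u))
      (mul_le_mul_of_nonneg_left (hdev u) hq0)
  -- per-resource inequality
  have hkey : ∀ e : ε,
      q * ((congCount Sstar e : ℝ) * (a1 e * ((congCount S e : ℝ)+1) + a0 e))
        + (a1 e * (congCount S e : ℝ) + a0 e * (congCount S e : ℝ))
      ≤ 2*q*(a1 e * ((congCount Sstar e : ℝ) * ((congCount Sstar e : ℝ)+1) / 2)
            + a0 e * (congCount Sstar e : ℝ))
        + q*(a1 e * ((congCount S e : ℝ) * ((congCount S e : ℝ)+1) / 2)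
            + a0 e * (congCount S e : ℝ)) := by
    intro e
    set n : ℝ := (congCount S e : ℝ) with hn
    set m : ℝ := (congCount Sstar e : ℝ) with hm
    have hn0 : 0 ≤ n := by positivity
    have hm0 : 0 ≤ m := by positivity
    have hk : 2*m*n + n ≤ 2*m^2 + n^2 := by
      rw [hn, hm]
      exact_mod_cast key_nat (congCount Sstar e) (congCount S e)
    have ha1 : q*(m*(n+1)) + n ≤ q*(m*(m+1)) + q*(n*(n+1)/2) := by
      have e1 : q*(m*(n+1) + n) ≤ q*(m*(m+1) + n*(n+1)/2) :=
        mul_le_mul_of_nonneg_left (by nlinarith) hq0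
      nlinarith
    have ha0 : q*m + n ≤ 2*q*m + q*n := by nlinarith
    nlinarith [mul_le_mul_of_nonneg_left ha1 (h1 e), mul_le_mul_of_nonneg_left ha0 (h0 e)]
  -- sum the per-resource inequality
  have hsum : q * (∑ e : ε, (congCount Sstar e : ℝ) * (a1 e * ((congCount S e : ℝ)+1) + a0 e))
        + ∑ e : ε, (a1 e * (congCount S e : ℝ) + a0 e * (congCount S e : ℝ))
      ≤ 2*q*linPot a1 a0 Sstar + q*linPot a1 a0 S := by
    rw [hpot S, hpot Sstar, Finset.mul_sum, Finset.mul_sum, Finset.mul_sum,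
      ← Finset.sum_add_distrib, ← Finset.sum_add_distrib]
    exact Finset.sum_le_sum fun e _ => hkey e
  -- potential identity
  have hid : 2 * linPot a1 a0 S
      = ∑ e : ε, (congCount S e : ℝ) * (a1 e * (congCount S e : ℝ) + a0 e)
        + ∑ e : ε, (a1 e * (congCount S e : ℝ) + a0 e * (congCount S e : ℝ)) := by
    rw [hpot S, Finset.mul_sum, ← Finset.sum_add_distrib]
    exact Finset.sum_congr rfl fun e _ => by ring
  have h2q : (0:ℝ) < 2 - q := by linarith
  rw [div_mul_eq_mul_div, le_div_iff₀ h2q]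
  nlinarith [hEq, hsum, hid]
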